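/- The ESM GCM does not satisfy Transaction Bundling: there exist a makespan function v satisfying (S1)–(S4), a finite set T, and transactions tx1, tx2 not in T with concatenation tx3 such that gas^ESM_{T∪{tx1,tx2}}(tx1) + gas^ESM_{T∪{tx1,tx2}}(tx2) > gas^ESM_{T∪{tx3}}(tx3). In particular, for T = {tx4} with tx1 ≃ (1,{k1}), tx2 ≃ (1,{k1}), tx3 ≃ (2,{k1}), tx4 ≃ (1,{k1}) and v the optimal-scheduler makespan (so v(T∪{tx1,tx2}) = v(T∪{tx3}) = 3), the left-hand side is 2 while the right-hand side is 3/2. -/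

import Mathlib

/-- The Equally-Split Makespan (ESM) GCM: `gas^ESM_T(tx) = v(T)/|T|`. -/
noncomputable def esmGas {Tx : Type} [DecidableEq Tx]
    (v : Finset Tx → ℝ) (T : Finset Tx) (_tx : Tx) : ℝ :=
  v T / (T.card : ℝ)

/-- Execution times of `tx1 ≃ (1,{k1})`, `tx2 ≃ (1,{k1})`, `tx3 ≃ (2,{k1})`,
`tx4 ≃ (1,{k1})` (indices `0,1,2,3`); `tx3` is the concatenation of `tx1` and
`tx2`. -/
noncomputable def tTx11 : Fin 4 → ℝ := ![1, 1, 2, 1]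

/-- Storage key sets: all transactions use the single key `k1`. -/
def keysTx11 : Fin 4 → Finset (Fin 1) := ![{0}, {0}, {0}, {0}]

/-- The ESM GCM does not satisfy Transaction Bundling: there is a
makespan function `v` satisfying (S1)–(S4) (the optimal-scheduler makespan, so
`v(T∪{tx1,tx2}) = v(T∪{tx3}) = 3`), a set `T = {tx4}`, and transactions
`tx1, tx2 ∉ T` with concatenation `tx3` such that
`gas^ESM_{T∪{tx1,tx2}}(tx1) + gas^ESM_{T∪{tx1,tx2}}(tx2) = 2 > 3/2 = gas^ESM_{T∪{tx3}}(tx3)`. -/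
theorem esmGas_not_transaction_bundling :
    ∃ v : Finset (Fin 4) → ℝ,
      -- (S1) monotonicity in T
      (∀ A B : Finset (Fin 4), A ⊆ B → v A ≤ v B) ∧
      -- (S2) monotonicity under bundling
      (∀ (T : Finset (Fin 4)) (a b c : Fin 4), a ∉ T → b ∉ T → c ∉ T → a ≠ b →
        tTx11 c = tTx11 a + tTx11 b → keysTx11 c = keysTx11 a ∪ keysTx11 b →
        v (insert a (insert b T)) ≤ v (insert c T)) ∧
      -- (S3) monotonicity in t and K
      (∀ (T : Finset (Fin 4)) (a b : Fin 4), a ∉ T → b ∉ T →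
        tTx11 a ≤ tTx11 b → keysTx11 a ⊆ keysTx11 b →
        v (insert a T) ≤ v (insert b T)) ∧
      -- (S4) empty set
      v ∅ = 0 ∧
      -- tx3 (= 2) is the concatenation of tx1 (= 0) and tx2 (= 1)
      tTx11 2 = tTx11 0 + tTx11 1 ∧ keysTx11 2 = keysTx11 0 ∪ keysTx11 1 ∧
      -- makespans
      v (insert 0 (insert 1 ({3} : Finset (Fin 4)))) = 3 ∧
      v (insert 2 ({3} : Finset (Fin 4))) = 3 ∧
      -- the gas values
      esmGas v (insert 0 (insert 1 ({3} : Finset (Fin 4)))) 0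
        + esmGas v (insert 0 (insert 1 ({3} : Finset (Fin 4)))) 1 = 2 ∧
      esmGas v (insert 2 ({3} : Finset (Fin 4))) 2 = 3 / 2 ∧
      esmGas v (insert 0 (insert 1 ({3} : Finset (Fin 4)))) 0
          + esmGas v (insert 0 (insert 1 ({3} : Finset (Fin 4)))) 1
        > esmGas v (insert 2 ({3} : Finset (Fin 4))) 2 := by
  refine ⟨fun T => ∑ i ∈ T, tTx11 i, ?_, ?_, ?_, ?_, ?_, ?_, ?_, ?_, ?_, ?_, ?_⟩
  · intro A B hAB
    apply Finset.sum_le_sum_of_subset_of_nonneg hAB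
    intro i _ _
    fin_cases i <;> norm_num [tTx11, Matrix.cons_val_two, Matrix.cons_val_three]
  · intro T a b c ha hb hc hab htc _
    dsimp only
    rw [Finset.sum_insert (by simp [Finset.mem_insert, hab, ha]),
      Finset.sum_insert hb, Finset.sum_insert hc, htc]
    linarith
  · intro T a b ha hb ht _
    dsimp only
    rw [Finset.sum_insert ha, Finset.sum_insert hb]
    linarith
  · simp
  · norm_num [tTx11, Matrix.cons_val_two, Matrix.cons_val_three]
  · decide
  · show ∑ x ∈ ({0,1,3} : Finset (Fin 4)), tTx11 x = 3
    rw [Finset.sum_insert (by decide), Finset.sum_insert (by decide),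
      Finset.sum_singleton]
    norm_num [tTx11, Matrix.cons_val_two, Matrix.cons_val_three]
  · show ∑ x ∈ ({2,3} : Finset (Fin 4)), tTx11 x = 3
    rw [Finset.sum_insert (by decide), Finset.sum_singleton]
    norm_num [tTx11, Matrix.cons_val_two, Matrix.cons_val_three]
  · have h : ∑ x ∈ ({0,1,3} : Finset (Fin 4)), tTx11 x = 3 := by
      rw [Finset.sum_insert (by decide), Finset.sum_insert (by decide),
        Finset.sum_singleton]
      norm_num [tTx11, Matrix.cons_val_two, Matrix.cons_val_three]
    simp only [esmGas, h, show ({0,1,3} : Finset (Fin 4)).card = 3 from by decide]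
    norm_num
  · have h : ∑ x ∈ ({2,3} : Finset (Fin 4)), tTx11 x = 3 := by
      rw [Finset.sum_insert (by decide), Finset.sum_singleton]
      norm_num [tTx11, Matrix.cons_val_two, Matrix.cons_val_three]
    simp only [esmGas, h, show ({2,3} : Finset (Fin 4)).card = 2 from by decide]
    norm_num
  · have h1 : ∑ x ∈ ({0,1,3} : Finset (Fin 4)), tTx11 x = 3 := by
      rw [Finset.sum_insert (by decide), Finset.sum_insert (by decide),
        Finset.sum_singleton]
      norm_num [tTx11, Matrix.cons_val_two, Matrix.cons_val_three]
    have h2 : ∑ x ∈ ({2,3} : Finset (Fin 4)), tTx11 x = 3 := by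
      rw [Finset.sum_insert (by decide), Finset.sum_singleton]
      norm_num [tTx11, Matrix.cons_val_two, Matrix.cons_val_three]
    simp only [esmGas, h1, h2, show ({0,1,3} : Finset (Fin 4)).card = 3 from by decide,
      show ({2,3} : Finset (Fin 4)).card = 2 from by decide]
    norm_num
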